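/- Fix M > 0 and 0 < ε ≤ M/4. Define the Borel probability measures on [0,M]: ν̃ = δ_{M/2} (the point mass at M/2) and μ̃ = 2√(ε/M)·δ_{M/2 − √(Mε)/2} + (1 − 2√(ε/M))·δ_{M/2}. Then d_W(μ̃,ν̃) ≤ ε, and for every price x ∈ [0,M], (1/2)·(opt(μ̃) − R(x,μ̃)) + (1/2)·(opt(ν̃) − R(x,ν̃)) ≥ √(M·ε)/4. -/

import Mathlib

open MeasureTheory

noncomputable section

/-- Cumulative distribution function `F(t) = μ([0,t])`. -/
def cdf0 (μ : Measure ℝ) (t : ℝ) : ℝ := (μ (Set.Icc 0 t)).toReal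

/-- Wasserstein-1 distance between measures on `[0,M]`: `∫₀^M |F(t) - H(t)| dt`. -/
def wassDist (M : ℝ) (μ ν : Measure ℝ) : ℝ :=
  ∫ t in Set.Icc (0:ℝ) M, |cdf0 μ t - cdf0 ν t|

/-- Expected pricing revenue `R(x,μ) = x · μ{ξ : ξ ≥ x}`. -/
def rev (x : ℝ) (μ : Measure ℝ) : ℝ := x * (μ {ξ : ℝ | x ≤ ξ}).toReal

/-- Optimal revenue `opt(μ) = sup_{x ∈ [0,M]} R(x,μ)`. -/
def optRev (M : ℝ) (μ : Measure ℝ) : ℝ := ⨆ x : Set.Icc (0:ℝ) M, rev x.1 μ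

/-- Two-point Bayesian lower bound of order `√(Mε)` for pricing under Wasserstein
heterogeneity. -/
theorem pricing_wasserstein_lower_bound
    (M ε : ℝ) (hM : 0 < M) (hε : 0 < ε) (hεM : ε ≤ M / 4)
    (νt μt : Measure ℝ)
    (hνt : νt = Measure.dirac (M / 2))
    (hμt : μt =
      ENNReal.ofReal (2 * Real.sqrt (ε / M)) •
        Measure.dirac (M / 2 - Real.sqrt (M * ε) / 2) +
      ENNReal.ofReal (1 - 2 * Real.sqrt (ε / M)) • Measure.dirac (M / 2)) :
    wassDist M μt νt ≤ ε ∧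
    ∀ x ∈ Set.Icc (0:ℝ) M,
      (1/2) * (optRev M μt - rev x μt) + (1/2) * (optRev M νt - rev x νt) ≥
        Real.sqrt (M * ε) / 4 := by
  classical
  have hM' : M ≠ 0 := ne_of_gt hM
  set s : ℝ := Real.sqrt (M * ε) with hs
  have hMε : (0:ℝ) ≤ M * ε := by positivity
  have hs0 : 0 < s := Real.sqrt_pos.mpr (by positivity)
  have hs2 : s ^ 2 = M * ε := Real.sq_sqrt hMε
  have hsM2 : s ≤ M / 2 := by nlinarith [hs2, hs0, hεM, hM]
  have hsqrt : Real.sqrt (ε / M) = s / M := by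
    have h1 : ε / M = (s / M) ^ 2 := by
      rw [div_pow, hs2]; field_simp
    rw [h1, Real.sqrt_sq (by positivity)]
  clear_value s
  rw [hsqrt] at hμt
  set p : ℝ := 2 * (s / M) with hpdef
  set a : ℝ := M / 2 - s / 2 with hadef
  set b : ℝ := M / 2 with hbdef
  have hp0 : 0 < p := by rw [hpdef]; positivity
  have hp1 : p ≤ 1 := by
    rw [hpdef]
    have : s / M ≤ 1 / 2 := by rw [div_le_div_iff₀ hM two_pos]; linarith
    linarith
  have ha0 : 0 < a := by rw [hadef]; linarith
  have hab : a < b := by rw [hadef, hbdef]; linarith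
  have hb0 : 0 < b := lt_trans ha0 hab
  have hbM : b ≤ M := by rw [hbdef]; linarith
  have hba : b - a = s / 2 := by rw [hadef, hbdef]; ring
  clear_value p a b
  have hμS : ∀ S : Set ℝ, MeasurableSet S →
      (μt S).toReal = (if a ∈ S then p else 0) + (if b ∈ S then 1 - p else 0) := by
    intro S hS
    rw [hμt]
    rw [Measure.add_apply, Measure.smul_apply, Measure.smul_apply, smul_eq_mul, smul_eq_mul,
      Measure.dirac_apply' _ hS, Measure.dirac_apply' _ hS]
    simp only [Set.indicator, Pi.one_apply]
    split_ifs with h1 h2 h2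
    · rw [mul_one, mul_one, ← ENNReal.ofReal_add hp0.le (by linarith),
        ENNReal.toReal_ofReal (by linarith)]
    · rw [mul_one, mul_zero, add_zero, ENNReal.toReal_ofReal hp0.le, add_zero]
    · rw [mul_zero, mul_one, zero_add, ENNReal.toReal_ofReal (by linarith), zero_add]
    · simp
  have hμtot : ∀ S : Set ℝ, (μt S).toReal ≤ 1 := by
    intro S
    have hle : μt S ≤ μt Set.univ := measure_mono (Set.subset_univ S)
    have htot : (μt Set.univ).toReal = 1 := by
      rw [hμS _ MeasurableSet.univ]; simp
    have hfin : μt Set.univ ≠ ⊤ := by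
      intro h; rw [h] at htot; simp at htot
    calc (μt S).toReal ≤ (μt Set.univ).toReal := ENNReal.toReal_mono hfin hle
      _ = 1 := htot
  have hIci : ∀ x : ℝ, {ξ : ℝ | x ≤ ξ} = Set.Ici x := by
    intro x; ext ξ; simp [Set.mem_Ici]
  have hrevμ : ∀ x : ℝ, rev x μt =
      x * ((if x ≤ a then p else 0) + (if x ≤ b then 1 - p else 0)) := by
    intro x
    rw [rev, hIci, hμS _ measurableSet_Ici]
    simp only [Set.mem_Ici]
  have hrevν : ∀ x : ℝ, rev x νt = if x ≤ b then x else 0 := by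
    intro x
    rw [rev, hIci, hνt, Measure.dirac_apply' _ measurableSet_Ici]
    simp only [Set.indicator, Set.mem_Ici, Pi.one_apply]
    split_ifs <;> simp
  have hbddμ : BddAbove (Set.range fun x : Set.Icc (0:ℝ) M => rev x.1 μt) := by
    refine ⟨M, ?_⟩
    rintro _ ⟨⟨x, hx⟩, rfl⟩
    show rev x μt ≤ M
    calc rev x μt = x * (μt {ξ : ℝ | x ≤ ξ}).toReal := rfl
      _ ≤ M * 1 := mul_le_mul hx.2 (hμtot _) ENNReal.toReal_nonneg hM.le
      _ = M := mul_one M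
  have hbddν : BddAbove (Set.range fun x : Set.Icc (0:ℝ) M => rev x.1 νt) := by
    refine ⟨M, ?_⟩
    rintro _ ⟨⟨x, hx⟩, rfl⟩
    show rev x νt ≤ M
    rw [hrevν]
    split_ifs
    · exact hx.2
    · exact hM.le
  have hoptμ : a ≤ optRev M μt := by
    have haM : a ∈ Set.Icc (0:ℝ) M := ⟨ha0.le, by linarith⟩
    have key : rev a μt = a := by
      rw [hrevμ, if_pos le_rfl, if_pos hab.le]; ring
    calc a = rev a μt := key.symm
      _ ≤ optRev M μt := le_ciSup hbddμ (⟨a, haM⟩ : Set.Icc (0:ℝ) M)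
  have hoptν : b ≤ optRev M νt := by
    have hbM' : b ∈ Set.Icc (0:ℝ) M := ⟨hb0.le, hbM⟩
    have key : rev b νt = b := by rw [hrevν, if_pos le_rfl]
    calc b = rev b νt := key.symm
      _ ≤ optRev M νt := le_ciSup hbddν (⟨b, hbM'⟩ : Set.Icc (0:ℝ) M)
  constructor
  · -- Wasserstein bound
    have hcdfν : ∀ t : ℝ, cdf0 νt t = if b ≤ t then 1 else 0 := by
      intro t
      rw [cdf0, hνt, Measure.dirac_apply' _ measurableSet_Icc]
      rw [Set.indicator]
      split_ifs with h1 h2 h2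
      · simp
      · exact absurd h1.2 h2
      · exact absurd ⟨hb0.le, h2⟩ h1
      · simp
    have hcdfμ : ∀ t : ℝ, cdf0 μt t =
        (if a ≤ t then p else 0) + (if b ≤ t then 1 - p else 0) := by
      intro t
      rw [cdf0, hμS _ measurableSet_Icc]
      congr 1
      · split_ifs with h1 h2 h2
        · rfl
        · exact absurd h1.2 h2
        · exact absurd ⟨ha0.le, h2⟩ h1
        · rfl
      · split_ifs with h1 h2 h2
        · rfl
        · exact absurd h1.2 h2
        · exact absurd ⟨hb0.le, h2⟩ h1
        · rfl
    have hfun : (fun t => |cdf0 μt t - cdf0 νt t|) =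
        fun t => (Set.Ico a b).indicator (fun _ => p) t := by
      funext t
      rw [hcdfμ, hcdfν, Set.indicator]
      simp only [Set.mem_Ico]
      rcases le_or_gt a t with h1 | h1
      · rcases le_or_gt b t with h2 | h2
        · rw [if_pos h1, if_pos h2, if_pos h2, if_neg (by intro h; exact absurd h2 (not_le.mpr h.2))]
          simp
        · rw [if_pos h1, if_neg (not_le.mpr h2), if_neg (not_le.mpr h2), if_pos ⟨h1, h2⟩]
          simp [abs_of_nonneg hp0.le]
      · rw [if_neg (not_le.mpr h1), if_neg (not_le.mpr (h1.trans_le hab.le)),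
          if_neg (not_le.mpr (h1.trans_le hab.le)),
          if_neg (by intro h; exact absurd h.1 (not_le.mpr h1))]
        simp
    rw [wassDist, hfun]
    rw [setIntegral_indicator measurableSet_Ico]
    have hinter : Set.Icc (0:ℝ) M ∩ Set.Ico a b = Set.Ico a b := by
      apply Set.inter_eq_self_of_subset_right
      intro t ht
      exact ⟨le_trans ha0.le ht.1, le_trans ht.2.le hbM⟩
    rw [hinter, setIntegral_const, Real.volume_real_Ico_of_le hab.le, smul_eq_mul]
    have heq : (b - a) * p = ε := by
      rw [hba, hpdef]
      field_simp
      nlinarith [hs2]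
    linarith [heq]
  · -- regret bound
    intro x hx
    rw [hrevμ, hrevν]
    rcases le_or_gt x a with hxa | hxa
    · rw [if_pos hxa, if_pos (hxa.trans hab.le), if_pos (hxa.trans hab.le)]
      have h1 : x * (p + (1 - p)) = x := by ring
      linarith [hoptμ, hoptν, hx.1]
    · rcases le_or_gt x b with hxb | hxb
      · rw [if_neg (not_le.mpr hxa), if_pos hxb, if_pos hxb]
        have h2 : x * (0 + (1 - p)) ≤ b * (1 - p) := by nlinarith
        have h3 : a - b * (1 - p) = s / 2 := by
          have : b * p = s := by rw [hbdef, hpdef]; field_simp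
          nlinarith [hba, this]
        linarith [hoptμ, hoptν]
      · rw [if_neg (not_le.mpr hxa), if_neg (not_le.mpr hxb), if_neg (not_le.mpr hxb)]
        have haM4 : M / 4 ≤ a := by rw [hadef]; linarith
        have hbM2 : b = M / 2 := hbdef
        simp only [mul_zero, zero_add, add_zero, sub_zero]
        linarith [hoptμ, hoptν]

end
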